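/- For every h ≥ 0: (1/2) e^{−h²} ≤ ∫₀^∞ e^{−(w+h)²/2} w dw ≤ e^{−h²/2}. -/

import Mathlib

open Real MeasureTheory Set Filter

lemma aux_integral {b : ℝ} (hb : 0 < b) :
    ∫ r in Set.Ioi (0 : ℝ), r * Real.exp (-b * r ^ 2) = (2 * b)⁻¹ := by
  have A : ∀ x : ℝ, HasDerivAt (fun x : ℝ => -(2 * b)⁻¹ * Real.exp (-b * x ^ 2))
      (x * Real.exp (-b * x ^ 2)) x := by
    intro x
    have : HasDerivAt (fun x : ℝ => -b * x ^ 2) (-b * (2 * x)) x := by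
      simpa using ((hasDerivAt_pow 2 x).const_mul (-b))
    have := (this.exp).const_mul (-(2 * b)⁻¹)
    refine this.congr_deriv ?_
    field_simp
  have B : Tendsto (fun x : ℝ => -(2 * b)⁻¹ * Real.exp (-b * x ^ 2)) atTop (nhds 0) := by
    have : Tendsto (fun x : ℝ => -b * x ^ 2) atTop atBot := by
      apply Tendsto.const_mul_atTop_of_neg (neg_neg_iff_pos.mpr hb)
      exact tendsto_pow_atTop (by norm_num)
    have := (Real.tendsto_exp_atBot.comp this).const_mul (-(2 * b)⁻¹)
    simpa using this
  have := MeasureTheory.integral_Ioi_of_hasDerivAt_of_tendsto' (a := (0:ℝ))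
    (fun x _ => A x) ((integrable_mul_exp_neg_mul_sq hb).integrableOn) B
  rw [this]
  simp

theorem gaussian_tail_integral_bounds (h : ℝ) (hh : 0 ≤ h) :
    (1 / 2) * Real.exp (-h ^ 2)
        ≤ ∫ w in Set.Ioi (0 : ℝ), Real.exp (-(w + h) ^ 2 / 2) * w
      ∧ ∫ w in Set.Ioi (0 : ℝ), Real.exp (-(w + h) ^ 2 / 2) * w
        ≤ Real.exp (-h ^ 2 / 2) := by
  have hmeas : MeasurableSet (Set.Ioi (0 : ℝ)) := measurableSet_Ioi
  -- integrability of the middle function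
  have hint : IntegrableOn (fun w => Real.exp (-(w + h) ^ 2 / 2) * w) (Set.Ioi (0 : ℝ)) := by
    apply Integrable.mono' ((integrable_mul_exp_neg_mul_sq (by norm_num : (0:ℝ) < 1/2)).integrableOn)
    · exact (((continuous_id.add continuous_const).pow 2).neg.div_const 2).rexp.mul
        continuous_id |>.aestronglyMeasurable.restrict
    · filter_upwards [ae_restrict_mem hmeas] with w hw
      have hw0 : 0 ≤ w := le_of_lt hw
      rw [Real.norm_eq_abs, abs_mul, abs_of_nonneg (Real.exp_pos _).le, abs_of_nonneg hw0]
      have : -(w + h) ^ 2 / 2 ≤ -(1/2) * w ^ 2 := by nlinarith [sq_nonneg h, mul_nonneg hw0 hh]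
      calc Real.exp (-(w + h) ^ 2 / 2) * w ≤ Real.exp (-(1/2) * w ^ 2) * w :=
            mul_le_mul_of_nonneg_right (Real.exp_le_exp.mpr this) hw0
        _ = w * Real.exp (-(1/2) * w ^ 2) := mul_comm _ _
  have hintlo : IntegrableOn (fun w => Real.exp (-h ^ 2) * (w * Real.exp (-1 * w ^ 2)))
      (Set.Ioi (0 : ℝ)) :=
    ((integrable_mul_exp_neg_mul_sq (by norm_num : (0:ℝ) < 1)).integrableOn).const_mul _
  have hinthi : IntegrableOn (fun w => Real.exp (-h ^ 2 / 2) * (w * Real.exp (-(1/2) * w ^ 2)))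
      (Set.Ioi (0 : ℝ)) :=
    ((integrable_mul_exp_neg_mul_sq (by norm_num : (0:ℝ) < 1/2)).integrableOn).const_mul _
  constructor
  · have hle : ∀ w ∈ Set.Ioi (0 : ℝ),
        Real.exp (-h ^ 2) * (w * Real.exp (-1 * w ^ 2)) ≤ Real.exp (-(w + h) ^ 2 / 2) * w := by
      intro w hw
      have hw0 : 0 ≤ w := le_of_lt hw
      have : Real.exp (-h ^ 2) * Real.exp (-1 * w ^ 2) ≤ Real.exp (-(w + h) ^ 2 / 2) := by
        rw [← Real.exp_add, Real.exp_le_exp]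
        nlinarith [sq_nonneg (w - h)]
      calc Real.exp (-h ^ 2) * (w * Real.exp (-1 * w ^ 2))
          = (Real.exp (-h ^ 2) * Real.exp (-1 * w ^ 2)) * w := by ring
        _ ≤ Real.exp (-(w + h) ^ 2 / 2) * w := mul_le_mul_of_nonneg_right this hw0
    have := MeasureTheory.setIntegral_mono_on hintlo hint hmeas hle
    calc (1 / 2) * Real.exp (-h ^ 2)
        = ∫ w in Set.Ioi (0 : ℝ), Real.exp (-h ^ 2) * (w * Real.exp (-1 * w ^ 2)) := by
          rw [MeasureTheory.integral_const_mul, aux_integral (by norm_num : (0:ℝ) < 1)]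
          ring
      _ ≤ _ := this
  · have hle : ∀ w ∈ Set.Ioi (0 : ℝ),
        Real.exp (-(w + h) ^ 2 / 2) * w ≤ Real.exp (-h ^ 2 / 2) * (w * Real.exp (-(1/2) * w ^ 2)) := by
      intro w hw
      have hw0 : 0 ≤ w := le_of_lt hw
      have : Real.exp (-(w + h) ^ 2 / 2) ≤ Real.exp (-h ^ 2 / 2) * Real.exp (-(1/2) * w ^ 2) := by
        rw [← Real.exp_add, Real.exp_le_exp]
        nlinarith [mul_nonneg hw0 hh]
      calc Real.exp (-(w + h) ^ 2 / 2) * w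
          ≤ (Real.exp (-h ^ 2 / 2) * Real.exp (-(1/2) * w ^ 2)) * w :=
            mul_le_mul_of_nonneg_right this hw0
        _ = Real.exp (-h ^ 2 / 2) * (w * Real.exp (-(1/2) * w ^ 2)) := by ring
    have := MeasureTheory.setIntegral_mono_on hint hinthi hmeas hle
    calc ∫ w in Set.Ioi (0 : ℝ), Real.exp (-(w + h) ^ 2 / 2) * w
        ≤ ∫ w in Set.Ioi (0 : ℝ), Real.exp (-h ^ 2 / 2) * (w * Real.exp (-(1/2) * w ^ 2)) := this
      _ = Real.exp (-h ^ 2 / 2) := by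
          rw [MeasureTheory.integral_const_mul, aux_integral (by norm_num : (0:ℝ) < 1/2)]
          norm_num
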